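/- Let χ_ℓ : ℝ → ℝ be a sequence of nondecreasing convex functions, each bounded from below, decreasing pointwise to the identity function t ↦ t as ℓ → ∞. Then for every R > 0, the left derivative satisfies χ_ℓ'(-R) → 1 as ℓ → ∞, and consequently the Lebesgue–Stieltjes measure g_ℓ(s) ds = χ_ℓ''(-s) ds on [0,∞) satisfies ∫₀^R g_ℓ(s) ds → 0 as ℓ → ∞. -/

import Mathlib

open Filter MeasureTheory Set

/-- A convex function on `ℝ` has a left derivative at every point, squeezed between
the slopes over `[x-1, x]` and `[x, x+1]`. -/
lemma convex_left_deriv {φ : ℝ → ℝ} (hc : ConvexOn ℝ Set.univ φ) (x : ℝ) :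
    HasDerivWithinAt φ (derivWithin φ (Set.Iio x) x) (Set.Iio x) x ∧
    (φ x - φ (x - 1)) ≤ derivWithin φ (Set.Iio x) x ∧
    derivWithin φ (Set.Iio x) x ≤ (φ (x + 1) - φ x) := by
  have key : ∀ y z : ℝ, y ≠ x → z ≠ x → y ≤ z → slope φ x y ≤ slope φ x z := by
    intro y z hy hz hyz
    simp only [slope_def_field]
    exact hc.secant_mono trivial trivial trivial hy hz hyz
  have mono : MonotoneOn (slope φ x) (Iio x) := fun y hy z hz hyz =>
    key y z (ne_of_lt hy) (ne_of_lt hz) hyz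
  have bdd : BddAbove (slope φ x '' Iio x) := by
    refine ⟨slope φ x (x + 1), ?_⟩
    rintro v ⟨y, hy, rfl⟩
    exact key y (x+1) (ne_of_lt hy) (by norm_num) (by linarith [mem_Iio.1 hy])
  have htend : Tendsto (slope φ x) (nhdsWithin x (Iio x)) (nhds (sSup (slope φ x '' Iio x))) :=
    mono.tendsto_nhdsLT bdd
  have hd : HasDerivWithinAt φ (sSup (slope φ x '' Iio x)) (Iio x) x :=
    (hasDerivWithinAt_iff_tendsto_slope' (by simp)).2 htend
  have hder : derivWithin φ (Iio x) x = sSup (slope φ x '' Iio x) :=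
    hd.derivWithin (uniqueDiffWithinAt_Iio x)
  have hs1 : slope φ x (x - 1) = φ x - φ (x - 1) := by
    rw [slope_def_field]; field_simp; ring
  have hs2 : slope φ x (x + 1) = φ (x + 1) - φ x := by
    rw [slope_def_field]; field_simp; ring
  refine ⟨hder ▸ hd, ?_, ?_⟩
  · rw [hder, ← hs1]
    exact le_csSup bdd ⟨x - 1, by simp, rfl⟩
  · rw [hder, ← hs2]
    refine csSup_le (⟨slope φ x (x-1), ⟨x-1, by simp, rfl⟩⟩) ?_
    rintro v ⟨y, hy, rfl⟩
    exact key y (x+1) (ne_of_lt hy) (by norm_num) (by linarith [mem_Iio.1 hy])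

/-- Under the hypotheses of `stmt2`, the left derivative at any point tends to `1`. -/
lemma left_deriv_tendsto_one (χ : ℕ → ℝ → ℝ)
    (hconv : ∀ ℓ, ConvexOn ℝ Set.univ (χ ℓ))
    (hlim : ∀ t : ℝ, Tendsto (fun ℓ => χ ℓ t) atTop (nhds t)) (x : ℝ) :
    Tendsto (fun ℓ => derivWithin (χ ℓ) (Set.Iio x) x) atTop (nhds 1) := by
  have hlow : Tendsto (fun ℓ => χ ℓ x - χ ℓ (x - 1)) atTop (nhds 1) := by
    have := (hlim x).sub (hlim (x - 1))
    simpa using this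
  have hhigh : Tendsto (fun ℓ => χ ℓ (x + 1) - χ ℓ x) atTop (nhds 1) := by
    have := (hlim (x + 1)).sub (hlim x)
    simpa using this
  exact tendsto_of_tendsto_of_tendsto_of_le_of_le hlow hhigh
    (fun ℓ => (convex_left_deriv (hconv ℓ) x).2.1)
    (fun ℓ => (convex_left_deriv (hconv ℓ) x).2.2)

/-- If `χ ℓ : ℝ → ℝ` is a sequence of nondecreasing convex functions,
each bounded from below, decreasing pointwise to the identity as `ℓ → ∞`, then for
every `R > 0` the left derivatives satisfy `χ ℓ '(-R) → 1`, and consequently the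
Lebesgue–Stieltjes measures `g ℓ (s) ds = χ ℓ ''(-s) ds` on `[0,∞)` (given by the
Stieltjes functions `f ℓ s = -χ ℓ '(-s)` for `s ≥ 0`, extended constantly below `0`)
satisfy `∫₀^R g ℓ (s) ds → 0`. -/
theorem stmt2 (χ : ℕ → ℝ → ℝ) (f : ℕ → StieltjesFunction ℝ)
    (hconv : ∀ ℓ, ConvexOn ℝ Set.univ (χ ℓ))
    (hmono : ∀ ℓ, Monotone (χ ℓ))
    (hbdd : ∀ ℓ, BddBelow (Set.range (χ ℓ)))
    (hdec : ∀ t : ℝ, Antitone fun ℓ => χ ℓ t)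
    (hlim : ∀ t : ℝ, Tendsto (fun ℓ => χ ℓ t) atTop (nhds t))
    (hf : ∀ ℓ, ∀ s : ℝ, 0 ≤ s → f ℓ s = - derivWithin (χ ℓ) (Set.Iio (-s)) (-s))
    (hf0 : ∀ ℓ, ∀ s : ℝ, s ≤ 0 → f ℓ s = f ℓ 0) :
    ∀ R : ℝ, 0 < R →
      Tendsto (fun ℓ => derivWithin (χ ℓ) (Set.Iio (-R)) (-R)) atTop (nhds 1) ∧
      Tendsto (fun ℓ => (f ℓ).measure (Set.Icc 0 R)) atTop (nhds 0) := by
  intro R hR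
  refine ⟨left_deriv_tendsto_one χ hconv hlim (-R), ?_⟩
  -- The left limit of `f ℓ` at `0` is `f ℓ 0` since `f ℓ` is constant on `(-∞, 0]`.
  have hleft : ∀ ℓ, Function.leftLim (f ℓ) 0 = f ℓ 0 := by
    intro ℓ
    refine leftLim_eq_of_tendsto ?_
    refine Tendsto.congr' ?_ (tendsto_const_nhds (x := f ℓ 0))
    filter_upwards [self_mem_nhdsWithin] with s hs
    exact (hf0 ℓ s (le_of_lt hs)).symm
  -- Rewrite the measure of `Icc 0 R`.
  have hmeas : ∀ ℓ, (f ℓ).measure (Set.Icc 0 R) =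
      ENNReal.ofReal (derivWithin (χ ℓ) (Set.Iio (-(0:ℝ))) (-(0:ℝ))
        - derivWithin (χ ℓ) (Set.Iio (-R)) (-R)) := by
    intro ℓ
    rw [StieltjesFunction.measure_Icc, hleft ℓ, hf ℓ R hR.le, hf ℓ 0 le_rfl]
    ring_nf
  simp only [hmeas]
  have h0 : Tendsto (fun ℓ => derivWithin (χ ℓ) (Set.Iio (-(0:ℝ))) (-(0:ℝ))
      - derivWithin (χ ℓ) (Set.Iio (-R)) (-R)) atTop (nhds 0) := by
    have := (left_deriv_tendsto_one χ hconv hlim (-(0:ℝ))).sub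
      (left_deriv_tendsto_one χ hconv hlim (-R))
    simpa using this
  have := (ENNReal.continuous_ofReal.tendsto 0).comp h0
  simpa [Function.comp_def] using this
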